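/- Let K ⊆ ℂ be a continuum (a compact connected set with more than one point). Suppose that for every connected component U of ℂ ∖ K the boundary ∂U is locally connected (in the uniform sense defined below), and that for every η > 0 only finitely many connected components of ℂ ∖ K have diameter greater than η. Then K is locally connected (in the same uniform sense). -/

import Mathlib

open Set Metric

/-- The connected components of a set `A`. -/
def setComponents (A : Set ℂ) : Set (Set ℂ) :=
  {I | ∃ x ∈ A, I = connectedComponentIn A x}

/-- A closed set `A ⊆ ℂ` is locally connected in the (uniform) sense of the paper:
for every `τ > 0` there is `θ > 0` such that any two points of `A` at distance `< θ`
lie in a continuum `B ⊆ A` (a compact connected set with more than one point) of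
diameter `< τ`. -/
def LocallyConnectedSet (A : Set ℂ) : Prop :=
  ∀ τ > (0:ℝ), ∃ θ > (0:ℝ), ∀ a ∈ A, ∀ b ∈ A, dist a b < θ →
    ∃ B ⊆ A, a ∈ B ∧ b ∈ B ∧ IsCompact B ∧ IsConnected B ∧ B.Nontrivial ∧ diam B < τ

section AuxLemmas
open Complex


lemma intval_subsingleton {S : Set ℝ} (hS : IsPreconnected S)
    (hint : S ⊆ Set.range (Int.cast : ℤ → ℝ)) : S.Subsingleton := by
  have key : ∀ m k : ℤ, (m:ℝ) ∈ S → (k:ℝ) ∈ S → m < k → False := by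
    intro m k hx hy hlt
    have hmem : (m : ℝ) + 1/2 ∈ S := by
      apply hS.ordConnected.out hx hy
      constructor
      · linarith
      · have : (m : ℝ) + 1 ≤ k := by exact_mod_cast hlt
        linarith
    obtain ⟨j, hj⟩ := hint hmem
    have h1 : (2*j : ℝ) = 2*m + 1 := by linarith
    have : (2*j : ℤ) = 2*m+1 := by exact_mod_cast h1
    omega
  intro x hx y hy
  obtain ⟨m, rfl⟩ := hint hx
  obtain ⟨k, rfl⟩ := hint hy
  rcases lt_trichotomy m k with h | h | h
  · exact absurd (key m k hx hy h) (by simp)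
  · rw [h]
  · exact absurd (key k m hy hx h) (by simp)

lemma lift_step {D : Set ℂ} {h₁ h₂ : ℂ → ℂ} (h₁c : ContinuousOn h₁ D)
    (h₂c : ContinuousOn h₂ D) (n₁ : ∀ z ∈ D, ‖h₁ z‖ = 1)
    (n₂ : ∀ z ∈ D, ‖h₂ z‖ = 1)
    (cl : ∀ z ∈ D, ‖h₂ z - h₁ z‖ < 1) {g₁ : ℂ → ℝ}
    (g₁c : ContinuousOn g₁ D) (g₁l : ∀ z ∈ D, h₁ z = Complex.exp (g₁ z * I)) :
    ∃ g₂ : ℂ → ℝ, ContinuousOn g₂ D ∧ (∀ z ∈ D, h₂ z = Complex.exp (g₂ z * I)) ∧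
      ∀ z ∈ D, h₂ z = h₁ z → g₂ z = g₁ z := by
  have hne₁ : ∀ z ∈ D, h₁ z ≠ 0 := by
    intro z hz h0
    have := n₁ z hz
    rw [h0] at this
    simp at this
  have habs : ∀ z ∈ D, ‖h₂ z / h₁ z‖ = 1 := by
    intro z hz
    rw [norm_div, n₁ z hz, n₂ z hz]; norm_num
  have hslit : ∀ z ∈ D, h₂ z / h₁ z ∈ Complex.slitPlane := by
    intro z hz
    rw [Complex.mem_slitPlane_iff]
    by_contra hcon
    push_neg at hcon
    obtain ⟨hre, him⟩ := hcon
    have hw : h₂ z / h₁ z = ((h₂ z / h₁ z).re : ℂ) := by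
      apply Complex.ext <;> simp [him]
    have habs' := habs z hz
    rw [hw] at habs'
    rw [Complex.norm_real, Real.norm_eq_abs] at habs'
    have hre1 : (h₂ z / h₁ z).re = -1 := by
      rcases abs_eq (by norm_num : (0:ℝ) ≤ 1) |>.mp habs' with h | h
      · linarith
      · exact h
    have heq : h₂ z = -h₁ z := by
      have h2 := hw
      rw [hre1] at h2
      rw [div_eq_iff (hne₁ z hz)] at h2
      rw [h2]; push_cast; ring
    have hcl := cl z hz
    rw [heq] at hcl
    have : h₂ z - h₁ z = h₂ z - h₁ z := rfl
    have habs2 : ‖-h₁ z - h₁ z‖ = 2 := by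
      have : -h₁ z - h₁ z = -(2 * h₁ z) := by ring
      rw [this, norm_neg, norm_mul, n₁ z hz]
      simp
    rw [habs2] at hcl
    linarith
  refine ⟨fun z => g₁ z + Complex.arg (h₂ z / h₁ z), ?_, ?_, ?_⟩
  · apply g₁c.add
    intro z hz
    exact ContinuousAt.comp_continuousWithinAt (g := Complex.arg)
      (Complex.continuousAt_arg (hslit z hz)) ((h₂c.div h₁c hne₁) z hz)
  · intro z hz
    have harg : Complex.exp ((Complex.arg (h₂ z / h₁ z) : ℂ) * I) = h₂ z / h₁ z := by
      have := Complex.norm_mul_exp_arg_mul_I (h₂ z / h₁ z)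
      rw [habs z hz] at this
      simpa using this
    push_cast
    rw [add_mul, Complex.exp_add, ← g₁l z hz, harg,
      mul_div_cancel₀ _ (hne₁ z hz)]
  · intro z hz heq
    have : h₂ z / h₁ z = 1 := by rw [heq, div_self (hne₁ z hz)]
    simp [this]

lemma lift_on_ball {h : ℂ → ℂ} (hc : Continuous h) (hn : ∀ z, ‖h z‖ = 1)
    (R : ℝ) (hR : 0 ≤ R) :
    ∃ g : ℂ → ℝ, ContinuousOn g (closedBall 0 R) ∧
      (∀ z ∈ closedBall (0:ℂ) R, h z = Complex.exp (g z * I)) ∧ g 0 = Complex.arg (h 0) := by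
  -- uniform continuity of (t, z) ↦ h (t • z) on [0,1] × closedBall
  set S : Set (ℝ × ℂ) := (Icc (0:ℝ) 1) ×ˢ (closedBall (0:ℂ) R) with hS
  have hScomp : IsCompact S := (isCompact_Icc).prod (isCompact_closedBall _ _)
  have hHcont : Continuous (fun p : ℝ × ℂ => h ((p.1 : ℂ) * p.2)) := by
    apply hc.comp
    exact (Complex.continuous_ofReal.comp continuous_fst).mul continuous_snd
  have hunif := hScomp.uniformContinuousOn_of_continuous hHcont.continuousOn
  rw [Metric.uniformContinuousOn_iff] at hunif
  obtain ⟨δ, hδpos, hδ⟩ := hunif 1 one_pos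
  -- the times c k
  set c : ℕ → ℝ := fun k => min (k * (δ/2)) 1 with hcdef
  have hc01 : ∀ k, c k ∈ Icc (0:ℝ) 1 := by
    intro k
    constructor
    · apply le_min _ zero_le_one
      positivity
    · exact min_le_right _ _
  have hcstep : ∀ k : ℕ, |c (k+1) - c k| < δ := by
    intro k
    have h1 : c k ≤ c (k+1) := by
      apply min_le_min _ le_rfl
      have : (k:ℝ) ≤ (k+1:ℕ) := by exact_mod_cast Nat.le_succ k
      nlinarith [hδpos]
    have h2 : c (k+1) - c k ≤ δ/2 := by
      rcases le_or_gt ((k:ℝ) * (δ/2)) 1 with hle | hlt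
      · have e1 : c k = k * (δ/2) := min_eq_left hle
        have e2 : c (k+1) ≤ ((k+1:ℕ):ℝ) * (δ/2) := min_le_left _ _
        push_cast at e2 ⊢
        rw [e1]
        linarith
      · have e1 : c k = 1 := min_eq_right hlt.le
        have e2 : c (k+1) ≤ 1 := min_le_right _ _
        linarith
    rw [abs_sub_comm, abs_of_nonpos (by linarith)]
    linarith
  -- inductive lifting
  have main : ∀ k : ℕ, ∃ g : ℂ → ℝ, ContinuousOn g (closedBall 0 R) ∧
      (∀ z ∈ closedBall (0:ℂ) R, h ((c k : ℂ) * z) = Complex.exp (g z * I)) ∧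
      g 0 = Complex.arg (h 0) := by
    intro k
    induction k with
    | zero =>
      refine ⟨fun _ => Complex.arg (h 0), continuousOn_const, ?_, rfl⟩
      intro z hz
      have hc0 : c 0 = 0 := by simp [hcdef]
      rw [hc0]
      push_cast
      rw [zero_mul]
      have := Complex.norm_mul_exp_arg_mul_I (h 0)
      rw [hn 0] at this
      symm
      simpa using this
    | succ k ih =>
      obtain ⟨g, gc, gl, g0⟩ := ih
      have hcl : ∀ z ∈ closedBall (0:ℂ) R,
          ‖h ((c (k+1) : ℂ) * z) - h ((c k : ℂ) * z)‖ < 1 := by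
        intro z hz
        have := hδ (c (k+1), z) ⟨hc01 (k+1), hz⟩ (c k, z) ⟨hc01 k, hz⟩ ?_
        · rwa [Complex.dist_eq] at this
        · rw [Prod.dist_eq]
          simp only [dist_self]
          rw [Real.dist_eq]
          simpa using lt_of_le_of_lt (le_max_left _ _) (max_lt (hcstep k) hδpos)
      have hcont1 : ContinuousOn (fun z => h ((c k : ℂ) * z)) (closedBall 0 R) :=
        (hc.comp (continuous_const.mul continuous_id)).continuousOn
      have hcont2 : ContinuousOn (fun z => h ((c (k+1) : ℂ) * z)) (closedBall 0 R) :=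
        (hc.comp (continuous_const.mul continuous_id)).continuousOn
      obtain ⟨g₂, g₂c, g₂l, g₂eq⟩ := lift_step hcont1 hcont2
        (fun z _ => hn _) (fun z _ => hn _) hcl gc gl
      refine ⟨g₂, g₂c, g₂l, ?_⟩
      have h00 : (0:ℂ) ∈ closedBall (0:ℂ) R := by simpa using hR
      rw [g₂eq 0 h00 (by norm_num), g0]
  obtain ⟨k, hk⟩ := exists_nat_ge (2/δ)
  have hck : c k = 1 := by
    have : (1:ℝ) ≤ k * (δ/2) := by
      rw [div_le_iff₀ hδpos] at hk
      nlinarith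
    exact min_eq_right this
  obtain ⟨g, gc, gl, g0⟩ := main k
  refine ⟨g, gc, ?_, g0⟩
  intro z hz
  have := gl z hz
  rw [hck] at this
  push_cast at this
  rwa [one_mul] at this
  
lemma exists_circle_lift {h : ℂ → ℂ} (hc : Continuous h) (hn : ∀ z, ‖h z‖ = 1) :
    ∃ g : ℂ → ℝ, Continuous g ∧ ∀ z, h z = Complex.exp (g z * I) := by
  choose gseq hgc hgl hg0 using fun n : ℕ => lift_on_ball hc hn n (Nat.cast_nonneg n)
  -- agreement of lifts on balls
  have agree : ∀ (n m : ℕ), n ≤ m → ∀ z ∈ closedBall (0:ℂ) n, gseq n z = gseq m z := by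
    intro n m hnm z hz
    have hsub : closedBall (0:ℂ) n ⊆ closedBall 0 m :=
      closedBall_subset_closedBall (by exact_mod_cast hnm)
    set q : ℂ → ℝ := fun z => (gseq n z - gseq m z) / (2 * Real.pi)
    have hqc : ContinuousOn q (closedBall 0 n) :=
      ((hgc n).sub ((hgc m).mono hsub)).div_const _
    have hqint : ∀ w ∈ closedBall (0:ℂ) n, q w ∈ Set.range (Int.cast : ℤ → ℝ) := by
      intro w hw
      have h1 := hgl n w hw
      have h2 := hgl m w (hsub hw)
      have hexp : Complex.exp (((gseq n w : ℂ) - gseq m w) * I) = 1 := by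
        rw [sub_mul, Complex.exp_sub, ← h1, ← h2, div_self]
        rw [h2]
        exact Complex.exp_ne_zero _
      rw [Complex.exp_eq_one_iff] at hexp
      obtain ⟨j, hj⟩ := hexp
      have : ((gseq n w : ℂ) - gseq m w) = j * (2 * Real.pi) := by
        have hIne : (I : ℂ) ≠ 0 := Complex.I_ne_zero
        have h' : ((gseq n w : ℂ) - gseq m w) * I = ((j:ℂ) * (2 * Real.pi)) * I := by
          rw [hj]; ring
        exact mul_right_cancel₀ hIne h'
      have hre : gseq n w - gseq m w = (j : ℝ) * (2 * Real.pi) := by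
        have := congrArg Complex.re this
        simpa using this
      refine ⟨j, ?_⟩
      show (j:ℝ) = q w
      have hpi : (2 * Real.pi) ≠ 0 := by positivity
      simp only [q]
      rw [hre]
      field_simp
    have himg := intval_subsingleton
      ((convex_closedBall (0:ℂ) (n:ℝ)).isPreconnected.image q hqc)
      (by rintro x ⟨w, hw, rfl⟩; exact hqint w hw)
    have h0mem : (0:ℂ) ∈ closedBall (0:ℂ) (n:ℝ) := by simp
    have hq0 : q 0 = 0 := by
      simp only [q]
      rw [hg0 n, hg0 m]
      simp
    have := himg ⟨z, hz, rfl⟩ ⟨0, h0mem, rfl⟩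
    rw [hq0] at this
    have hpi : (2 * Real.pi) ≠ 0 := by positivity
    have := div_eq_zero_iff.mp this
    rcases this with h | h
    · linarith [sub_eq_zero.mp (by linarith : gseq n z - gseq m z = 0)]
    · exact absurd h hpi
  -- global function
  set g : ℂ → ℝ := fun z => gseq ⌈‖z‖⌉₊ z with hgdef
  have hglift : ∀ z, h z = Complex.exp (g z * I) := by
    intro z
    apply hgl
    simp only [mem_closedBall, dist_zero_right]
    exact_mod_cast Nat.le_ceil ‖z‖
  have hkey : ∀ (n : ℕ) (w : ℂ), ‖w‖ ≤ n → g w = gseq n w := by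
    intro n w hw
    have h1 : (⌈‖w‖⌉₊ : ℕ) ≤ n := Nat.ceil_le.mpr (by exact_mod_cast hw)
    have hwmem : w ∈ closedBall (0:ℂ) (⌈‖w‖⌉₊:ℝ) := by
      simp only [mem_closedBall, dist_zero_right]
      exact_mod_cast Nat.le_ceil ‖w‖
    exact agree _ n h1 w hwmem
  refine ⟨g, ?_, hglift⟩
  rw [continuous_iff_continuousAt]
  intro z
  set n : ℕ := ⌈‖z‖⌉₊ + 1 with hn'
  have hzball : z ∈ ball (0:ℂ) (n:ℝ) := by
    simp only [mem_ball, dist_zero_right]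
    push_cast
    have := Nat.le_ceil ‖z‖
    calc ‖z‖ ≤ (⌈‖z‖⌉₊ : ℝ) := this
    _ < _ := by rw [hn']; push_cast; linarith
  have hev : ∀ w ∈ ball (0:ℂ) (n:ℝ), g w = gseq n w := by
    intro w hw
    apply hkey
    simp only [mem_ball, dist_zero_right] at hw
    exact hw.le
  have hCA : ContinuousAt (gseq n) z := by
    apply (hgc n).continuousAt
    exact Filter.mem_of_superset (isOpen_ball.mem_nhds hzball) ball_subset_closedBall
  apply hCA.congr
  apply Filter.eventuallyEq_of_mem (isOpen_ball.mem_nhds hzball)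
  intro w hw
  exact (hev w hw).symm

lemma closed_separation {A : Set ℂ} (hA : IsClosed A) (h : ¬ IsPreconnected A) :
    ∃ F₁ F₂ : Set ℂ, IsClosed F₁ ∧ IsClosed F₂ ∧ F₁.Nonempty ∧ F₂.Nonempty ∧
      Disjoint F₁ F₂ ∧ A = F₁ ∪ F₂ := by
  rw [IsPreconnected] at h
  push_neg at h
  obtain ⟨u, v, hu, hv, hcov, ⟨x, hxA, hxu⟩, ⟨y, hyA, hyv⟩, hdisj⟩ := h
  have hdisj' : A ∩ (u ∩ v) = ∅ := hdisj
  refine ⟨A \ v, A \ u, hA.sdiff hv, hA.sdiff hu, ⟨x, hxA, ?_⟩, ⟨y, hyA, ?_⟩, ?_, ?_⟩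
  · intro hxv
    have : x ∈ A ∩ (u ∩ v) := ⟨hxA, hxu, hxv⟩
    rw [hdisj'] at this; exact this
  · intro hyu
    have : y ∈ A ∩ (u ∩ v) := ⟨hyA, hyu, hyv⟩
    rw [hdisj'] at this; exact this
  · rw [Set.disjoint_iff]
    rintro w ⟨⟨hwA, hwv⟩, ⟨_, hwu⟩⟩
    rcases hcov hwA with h | h
    exacts [hwu h, hwv h]
  · ext w
    constructor
    · intro hwA
      rcases hcov hwA with h | h
      · left; exact ⟨hwA, fun hwv => by
          have : w ∈ A ∩ (u ∩ v) := ⟨hwA, h, hwv⟩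
          rw [hdisj'] at this; exact this⟩
      · right; exact ⟨hwA, fun hwu => by
          have : w ∈ A ∩ (u ∩ v) := ⟨hwA, hwu, h⟩
          rw [hdisj'] at this; exact this⟩
    · rintro (⟨h, _⟩ | ⟨h, _⟩) <;> exact h

lemma unicoherence {M N : Set ℂ} (hM : IsClosed M) (hN : IsClosed N)
    (hMc : IsPreconnected M) (hNc : IsPreconnected N) (hun : M ∪ N = univ) :
    IsPreconnected (M ∩ N) := by
  by_contra hnc
  obtain ⟨F₁, F₂, hF₁, hF₂, ⟨x₁, hx₁⟩, ⟨x₂, hx₂⟩, hFdisj, hFun⟩ :=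
    closed_separation (hM.inter hN) hnc
  obtain ⟨f, hf0, hf1, _⟩ := exists_continuous_zero_one_of_isClosed hF₁ hF₂ hFdisj
  classical
  -- the glued circle-valued map
  set h : ℂ → ℂ := fun z =>
    if z ∈ M then Complex.exp (Real.pi * f z * I) else Complex.exp (-(Real.pi * f z) * I)
    with hhdef
  have hfint : ∀ z ∈ M ∩ N, Complex.exp (Real.pi * f z * I) =
      Complex.exp (-(Real.pi * f z) * I) := by
    intro z hz
    rw [hFun] at hz
    rcases hz with hz | hz
    · rw [hf0 hz]; norm_num
    · rw [hf1 hz]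
      norm_num
  have hhc : Continuous h := by
    apply Continuous.if
    · intro a ha
      have haM : a ∈ M := by
        have : frontier {x | x ∈ M} ⊆ M := by
          rw [show {x | x ∈ M} = M from rfl]
          exact hM.frontier_subset
        exact this ha
      have haN : a ∈ N := by
        have h1 : frontier {x | x ∈ M} ⊆ closure Mᶜ := by
          rw [show {x | x ∈ M} = M from rfl, ← frontier_compl]
          exact frontier_subset_closure
        have h2 : Mᶜ ⊆ N := by
          intro w hw
          rcases (hun ▸ Set.mem_univ w : w ∈ M ∪ N) with h | h
          · exact absurd h hw
          · exact h
        have h3 : closure Mᶜ ⊆ N := hN.closure_subset_iff.mpr h2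
        exact h3 (h1 ha)
      exact hfint a ⟨haM, haN⟩
    · exact Continuous.cexp (by continuity)
    · exact Continuous.cexp (by continuity)
  have hhn : ∀ z, ‖h z‖ = 1 := by
    intro z
    simp only [hhdef]
    split_ifs <;> rw [Complex.norm_exp] <;> simp
  obtain ⟨g, hgc, hgl⟩ := exists_circle_lift hhc hhn
  -- On M : (g - π f)/(2π) is integer valued; on N : (g + π f)/(2π)
  have hpi : (0:ℝ) < 2 * Real.pi := by positivity
  have key : ∀ (D : Set ℂ) (ε : ℝ), IsPreconnected D → (∀ z ∈ D, h z = Complex.exp (ε * (Real.pi * f z) * I)) →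
      ∀ z ∈ D, ∀ w ∈ D, (g z - ε * (Real.pi * f z)) / (2 * Real.pi) =
        (g w - ε * (Real.pi * f w)) / (2 * Real.pi) := by
    intro D ε hD hDh z hz w hw
    set q : ℂ → ℝ := fun z => (g z - ε * (Real.pi * f z)) / (2 * Real.pi) with hq
    have hqc : ContinuousOn q D := by
      apply ContinuousOn.div_const
      apply ContinuousOn.sub hgc.continuousOn
      exact (continuous_const.mul (continuous_const.mul f.continuous)).continuousOn
    have hqint : ∀ z ∈ D, q z ∈ Set.range (Int.cast : ℤ → ℝ) := by
      intro z hz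
      have h1 := hgl z
      have h2 := hDh z hz
      have hexp : Complex.exp (((g z : ℂ) - ε * (Real.pi * f z)) * I) = 1 := by
        rw [sub_mul, Complex.exp_sub, ← h1, h2, div_self (Complex.exp_ne_zero _)]
      rw [Complex.exp_eq_one_iff] at hexp
      obtain ⟨j, hj⟩ := hexp
      have h' : ((g z : ℂ) - ε * (Real.pi * f z)) * I = ((j:ℂ) * (2 * Real.pi)) * I := by
        rw [hj]; ring
      have h'' := mul_right_cancel₀ Complex.I_ne_zero h'
      have hre : g z - ε * (Real.pi * f z) = (j : ℝ) * (2 * Real.pi) := by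
        have := congrArg Complex.re h''
        simpa using this
      refine ⟨j, ?_⟩
      show (j:ℝ) = q z
      simp only [hq]
      rw [hre]
      field_simp
    have := intval_subsingleton (hD.image q hqc) (by rintro x ⟨w', hw', rfl⟩; exact hqint w' hw')
    exact this ⟨z, hz, rfl⟩ ⟨w, hw, rfl⟩
  have hMh : ∀ z ∈ M, h z = Complex.exp ((1:ℝ) * (Real.pi * f z) * I) := by
    intro z hz
    simp only [hhdef, if_pos hz]
    congr 1
    push_cast
    ring
  have hNh : ∀ z ∈ N, h z = Complex.exp ((-1:ℝ) * (Real.pi * f z) * I) := by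
    intro z hz
    by_cases hzM : z ∈ M
    · simp only [hhdef, if_pos hzM]
      rw [hfint z ⟨hzM, hz⟩]
      congr 1
      push_cast
      ring
    · simp only [hhdef, if_neg hzM]
      congr 1
      push_cast
      ring
  have hx₁MN : x₁ ∈ M ∩ N := by rw [hFun]; exact Or.inl hx₁
  have hx₂MN : x₂ ∈ M ∩ N := by rw [hFun]; exact Or.inr hx₂
  have hMeq := key M 1 hMc hMh x₁ hx₁MN.1 x₂ hx₂MN.1
  have hNeq := key N (-1) hNc hNh x₁ hx₁MN.2 x₂ hx₂MN.2
  have hf₁ : f x₁ = 0 := hf0 hx₁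
  have hf₂ : f x₂ = 1 := hf1 hx₂
  rw [hf₁, hf₂] at hMeq hNeq
  have hpine : (2:ℝ) * Real.pi ≠ 0 := ne_of_gt hpi
  field_simp at hMeq hNeq
  have hpigt : Real.pi > 0 := Real.pi_pos
  linarith

lemma frontier_cc_disj {F : Set ℂ} (hF : IsOpen F) {x : ℂ} :
    frontier (connectedComponentIn F x) ∩ F = ∅ := by
  by_cases hx : x ∈ F
  · rw [← Set.not_nonempty_iff_eq_empty]
    rintro ⟨y, hyf, hyF⟩
    have hccop : IsOpen (connectedComponentIn F x) := hF.connectedComponentIn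
    have hyncc : y ∉ connectedComponentIn F x := by
      intro hy
      rw [frontier, hccop.interior_eq] at hyf
      exact hyf.2 hy
    -- y's own component is an open neighborhood meeting cc x
    have hyo : IsOpen (connectedComponentIn F y) := hF.connectedComponentIn
    have hymem : y ∈ connectedComponentIn F y := mem_connectedComponentIn hyF
    have hmeet : (connectedComponentIn F y ∩ connectedComponentIn F x).Nonempty := by
      have hyc : y ∈ closure (connectedComponentIn F x) := hyf.1
      rcases mem_closure_iff.mp hyc _ hyo hymem with ⟨z, hz1, hz2⟩
      exact ⟨z, hz1, hz2⟩
    obtain ⟨z, hz1, hz2⟩ := hmeet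
    have e1 := connectedComponentIn_eq hz1
    have e2 := connectedComponentIn_eq hz2
    rw [e2, ← e1] at hyncc
    exact hyncc hymem
  · rw [connectedComponentIn_eq_empty hx]
    simp

lemma frontier_comp_subset (K : Set ℂ) (hKcl : IsClosed K) {U : Set ℂ}
    (hU : U ∈ setComponents Kᶜ) : frontier U ⊆ K := by
  obtain ⟨x, hx, rfl⟩ := hU
  intro y hy
  by_contra hyK
  have : y ∈ frontier (connectedComponentIn Kᶜ x) ∩ Kᶜ := ⟨hy, hyK⟩
  rw [frontier_cc_disj hKcl.isOpen_compl] at this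
  exact this

lemma frontier_comp_preconnected (K : Set ℂ) (hKcl : IsClosed K)
    (hKconn : IsPreconnected K) (hKne : K.Nonempty) {U : Set ℂ}
    (hU : U ∈ setComponents Kᶜ) : IsPreconnected (frontier U) := by
  obtain ⟨x₀, hx₀⟩ := hKne
  obtain ⟨x, hx, hUeq⟩ := hU
  have hUopen : IsOpen U := by rw [hUeq]; exact hKcl.isOpen_compl.connectedComponentIn
  have hUpre : IsPreconnected U := by rw [hUeq]; exact isPreconnected_connectedComponentIn
  have hUsub : U ⊆ Kᶜ := by rw [hUeq]; exact connectedComponentIn_subset _ _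
  -- pieces of N = Uᶜ
  set C : Set (Set ℂ) :=
    insert K {P | ∃ y, (y ∈ Kᶜ ∧ y ∉ U) ∧ P = K ∪ closure (connectedComponentIn Kᶜ y)} with hC
  have hfcc : ∀ y, y ∈ Kᶜ → frontier (connectedComponentIn Kᶜ y) ⊆ K := by
    intro y hy
    exact frontier_comp_subset K hKcl ⟨y, hy, rfl⟩
  have hccne : ∀ y, y ∈ Kᶜ → (K ∩ closure (connectedComponentIn Kᶜ y)).Nonempty := by
    intro y hy
    have hne : (frontier (connectedComponentIn Kᶜ y)).Nonempty := by
      rw [nonempty_frontier_iff]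
      refine ⟨⟨y, mem_connectedComponentIn hy⟩, ?_⟩
      intro heq
      have hx₀cc : x₀ ∈ connectedComponentIn Kᶜ y := by rw [heq]; trivial
      exact (connectedComponentIn_subset _ _ hx₀cc) hx₀
    obtain ⟨w, hw⟩ := hne
    exact ⟨w, hfcc y hy hw, frontier_subset_closure hw⟩
  have hccdisjU : ∀ y, y ∈ Kᶜ → y ∉ U → closure (connectedComponentIn Kᶜ y) ∩ U = ∅ := by
    intro y hy hyU
    rw [← Set.not_nonempty_iff_eq_empty]
    rintro ⟨z, hz1, hz2⟩
    rw [closure_eq_self_union_frontier] at hz1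
    rcases hz1 with hz1 | hz1
    · -- z in the component of y and in U : components coincide
      have e1 := connectedComponentIn_eq hz1
      have hzU : U = connectedComponentIn Kᶜ z := by
        rw [hUeq]
        exact connectedComponentIn_eq (by rw [← hUeq]; exact hz2)
      rw [hzU, ← e1] at hyU
      exact hyU (mem_connectedComponentIn hy)
    · have := hfcc y hy hz1
      exact (hUsub hz2) this
  have hNpre : IsPreconnected Uᶜ := by
    have hNeq : Uᶜ = ⋃₀ C := by
      ext w
      constructor
      · intro hw
        by_cases hwK : w ∈ K
        · exact ⟨K, Or.inl rfl, hwK⟩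
        · refine ⟨K ∪ closure (connectedComponentIn Kᶜ w), Or.inr ⟨w, ⟨hwK, hw⟩, rfl⟩, ?_⟩
          exact Or.inr (subset_closure (mem_connectedComponentIn hwK))
      · rintro ⟨P, hP, hwP⟩
        rcases hP with rfl | ⟨y, ⟨hy, hyU⟩, rfl⟩
        · exact fun hwU => (hUsub hwU) hwP
        · rcases hwP with hwP | hwP
          · exact fun hwU => (hUsub hwU) hwP
          · intro hwU
            have := hccdisjU y hy hyU
            rw [← Set.not_nonempty_iff_eq_empty] at this
            exact this ⟨w, hwP, hwU⟩
    rw [hNeq]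
    apply isPreconnected_sUnion x₀
    · rintro P (rfl | ⟨y, ⟨hy, hyU⟩, rfl⟩)
      · exact hx₀
      · exact Or.inl hx₀
    · rintro P (rfl | ⟨y, ⟨hy, hyU⟩, rfl⟩)
      · exact hKconn
      · obtain ⟨w, hw1, hw2⟩ := hccne y hy
        exact IsPreconnected.union w hw1 hw2 hKconn
          isPreconnected_connectedComponentIn.closure
  have hfront : frontier U = closure U ∩ Uᶜ := by
    rw [frontier, hUopen.interior_eq]
    rfl
  rw [hfront]
  have huniv : closure U ∪ Uᶜ = univ := by
    ext z
    simp only [Set.mem_union, Set.mem_univ, iff_true, Set.mem_compl_iff]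
    by_cases hz : z ∈ U
    · exact Or.inl (subset_closure hz)
    · exact Or.inr hz
  exact unicoherence isClosed_closure hUopen.isClosed_compl hUpre.closure hNpre huniv

end AuxLemmas

/-- Proposition 3: a continuum `K ⊆ ℂ` is locally connected provided the boundary of
every connected component of `ℂ ∖ K` is locally connected and, for every `η > 0`,
only finitely many components of `ℂ ∖ K` have diameter greater than `η` (diameters
taken in `[0,∞]`, so the unbounded component counts as one such component). -/

theorem fatou_john_stmt7 (K : Set ℂ) (hKc : IsCompact K) (hKconn : IsConnected K)
    (hKnt : K.Nontrivial)
    (hbd : ∀ U ∈ setComponents Kᶜ, LocallyConnectedSet (frontier U))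
    (hfin : ∀ η > (0:ℝ),
      {U ∈ setComponents Kᶜ | ENNReal.ofReal η < EMetric.diam U}.Finite) :
    LocallyConnectedSet K := by
  classical
  intro τ hτ
  have hKcl : IsClosed K := hKc.isClosed
  have hτ8 : (0:ℝ) < τ/8 := by linarith
  -- choose moduli for all components
  have hP : ∀ U ∈ setComponents Kᶜ, ∃ θU : ℝ, 0 < θU ∧
      ∀ a ∈ frontier U, ∀ b ∈ frontier U, dist a b < θU →
      ∃ B ⊆ frontier U, a ∈ B ∧ b ∈ B ∧ IsCompact B ∧ IsConnected B ∧ B.Nontrivial ∧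
        diam B < τ/8 := by
    intro U hU
    obtain ⟨θU, hθU, hprop⟩ := hbd U hU (τ/8) hτ8
    exact ⟨θU, hθU, hprop⟩
  set Θ : Set ℂ → ℝ := fun U => if h : U ∈ setComponents Kᶜ then (hP U h).choose else 1
    with hΘdef
  have hΘpos : ∀ U ∈ setComponents Kᶜ, 0 < Θ U := by
    intro U hU
    simp only [hΘdef, dif_pos hU]
    exact (hP U hU).choose_spec.1
  have hΘprop : ∀ U ∈ setComponents Kᶜ, ∀ a ∈ frontier U, ∀ b ∈ frontier U,
      dist a b < Θ U → ∃ B ⊆ frontier U, a ∈ B ∧ b ∈ B ∧ IsCompact B ∧ IsConnected B ∧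
      B.Nontrivial ∧ diam B < τ/8 := by
    intro U hU
    have := (hP U hU).choose_spec.2
    simpa only [hΘdef, dif_pos hU] using this
  -- big components
  have hBigF := hfin (τ/8) hτ8
  set BigT : Finset (Set ℂ) := hBigF.toFinset with hBigTdef
  set θ : ℝ := (insert (τ/8) (BigT.image Θ)).min' (Finset.insert_nonempty _ _) with hθdef
  have hθle : θ ≤ τ/8 := Finset.min'_le _ _ (Finset.mem_insert_self _ _)
  have hθleΘ : ∀ U ∈ setComponents Kᶜ, ENNReal.ofReal (τ/8) < EMetric.diam U → θ ≤ Θ U := by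
    intro U hU hbig
    apply Finset.min'_le
    apply Finset.mem_insert_of_mem
    apply Finset.mem_image_of_mem
    rw [hBigTdef, Set.Finite.mem_toFinset]
    exact ⟨hU, hbig⟩
  have hθpos : 0 < θ := by
    have hmem := Finset.min'_mem (insert (τ/8) (BigT.image Θ)) (Finset.insert_nonempty _ _)
    rw [← hθdef] at hmem
    rcases Finset.mem_insert.mp hmem with h | h
    · rw [h]; exact hτ8
    · obtain ⟨U, hU, hUeq⟩ := Finset.mem_image.mp h
      rw [hBigTdef, Set.Finite.mem_toFinset] at hU
      rw [← hUeq]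
      exact hΘpos U hU.1
  -- main construction for a pair of points
  have main : ∀ a ∈ K, ∀ b ∈ K, dist a b < θ → ∃ B ⊆ K, a ∈ B ∧ b ∈ B ∧
      IsCompact B ∧ IsPreconnected B ∧ diam B < τ := by
    intro a ha b hb hab
    set s : ℝ → ℂ := fun t => a + (t:ℂ) * (b - a) with hsdef
    have hscont : Continuous s := by
      apply continuous_const.add
      exact (Complex.continuous_ofReal.mul continuous_const)
    have hs0 : s 0 = a := by simp [hsdef]
    have hs1 : s 1 = b := by simp [hsdef]
    have hsdist : ∀ t u : ℝ, dist (s t) (s u) = |t - u| * dist a b := by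
      intro t u
      simp only [hsdef, Complex.dist_eq]
      have h1 : a + (t:ℂ) * (b - a) - (a + (u:ℂ) * (b - a)) = (((t - u : ℝ)):ℂ) * (b - a) := by
        push_cast; ring
      rw [h1, norm_mul, Complex.norm_real, Real.norm_eq_abs]
      congr 1
      exact norm_sub_rev b a
    set E : Set ℝ := Icc (0:ℝ) 1 ∩ s ⁻¹' K with hEdef
    have hEclosed : IsClosed E := isClosed_Icc.inter (hKcl.preimage hscont)
    have h0E : (0:ℝ) ∈ E := ⟨⟨le_refl 0, zero_le_one⟩, by simp only [Set.mem_preimage, hs0]; exact ha⟩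
    have h1E : (1:ℝ) ∈ E := ⟨⟨zero_le_one, le_refl 1⟩, by simp only [Set.mem_preimage, hs1]; exact hb⟩
    have hEIcc : E ⊆ Icc (0:ℝ) 1 := Set.inter_subset_left
    set G : Set ℝ := Ioo (0:ℝ) 1 ∩ s ⁻¹' Kᶜ with hGdef
    have hGE : ∀ t ∈ G, t ∉ E := by
      rintro t ⟨_, htK⟩ ⟨_, htK'⟩
      exact htK htK'
    have hGIcc : ∀ t ∈ G, t ∈ Icc (0:ℝ) 1 := fun t ht => ⟨ht.1.1.le, ht.1.2.le⟩
    set p : ℝ → ℝ := fun t => sSup (E ∩ Iic t) with hpdef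
    set q : ℝ → ℝ := fun t => sInf (E ∩ Ici t) with hqdef
    -- basic properties of p and q on G
    have hpmem : ∀ t ∈ G, p t ∈ E ∧ p t ≤ t := by
      intro t ht
      have hne : (E ∩ Iic t).Nonempty := ⟨0, h0E, ht.1.1.le⟩
      have hbdd : BddAbove (E ∩ Iic t) := ⟨t, fun r hr => hr.2⟩
      have := (hEclosed.inter isClosed_Iic).csSup_mem hne hbdd
      exact ⟨this.1, this.2⟩
    have hqmem : ∀ t ∈ G, q t ∈ E ∧ t ≤ q t := by
      intro t ht
      have hne : (E ∩ Ici t).Nonempty := ⟨1, h1E, ht.1.2.le⟩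
      have hbdd : BddBelow (E ∩ Ici t) := ⟨t, fun r hr => hr.2⟩
      have := (hEclosed.inter isClosed_Ici).csInf_mem hne hbdd
      exact ⟨this.1, this.2⟩
    have hplt : ∀ t ∈ G, p t < t := by
      intro t ht
      rcases lt_or_eq_of_le (hpmem t ht).2 with h | h
      · exact h
      · exact absurd ((h ▸ (hpmem t ht).1) : t ∈ E) (hGE t ht)
    have hqgt : ∀ t ∈ G, t < q t := by
      intro t ht
      rcases lt_or_eq_of_le (hqmem t ht).2 with h | h
      · exact h
      · exact absurd ((h ▸ (hqmem t ht).1) : t ∈ E) (hGE t ht)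
    have hp0 : ∀ t ∈ G, 0 ≤ p t := by
      intro t ht
      exact le_csSup ⟨t, fun r hr => hr.2⟩ ⟨h0E, ht.1.1.le⟩
    have hq1 : ∀ t ∈ G, q t ≤ 1 := by
      intro t ht
      exact csInf_le ⟨t, fun r hr => hr.2⟩ ⟨h1E, ht.1.2.le⟩
    have hgapE : ∀ t ∈ G, ∀ r, p t < r → r < q t → r ∉ E := by
      intro t ht r h1 h2 hrE
      rcases le_or_gt r t with h | h
      · have hle : r ≤ p t := le_csSup ⟨t, fun r' hr' => hr'.2⟩ ⟨hrE, h⟩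
        exact absurd hle (not_le_of_gt h1)
      · have hle : q t ≤ r := csInf_le ⟨t, fun r' hr' => hr'.2⟩ ⟨hrE, h.le⟩
        exact absurd hle (not_le_of_gt h2)
    have hgapG : ∀ t ∈ G, ∀ r, p t < r → r < q t → r ∈ G := by
      intro t ht r h1 h2
      have hrI : r ∈ Ioo (0:ℝ) 1 := ⟨lt_of_le_of_lt (hp0 t ht) h1, lt_of_lt_of_le h2 (hq1 t ht)⟩
      refine ⟨hrI, ?_⟩
      intro hrK
      exact (hgapE t ht r h1 h2) ⟨⟨hrI.1.le, hrI.2.le⟩, hrK⟩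
    -- the component crossed by the gap of t
    have hstKc : ∀ t ∈ G, s t ∈ Kᶜ := fun t ht => ht.2
    have himg : ∀ t ∈ G, s '' Ioo (p t) (q t) ⊆ connectedComponentIn Kᶜ (s t) := by
      intro t ht
      apply IsPreconnected.subset_connectedComponentIn
      · exact isPreconnected_Ioo.image s hscont.continuousOn
      · exact ⟨t, ⟨hplt t ht, hqgt t ht⟩, rfl⟩
      · rintro _ ⟨r, hr, rfl⟩
        exact (hgapG t ht r hr.1 hr.2).2
    have hUopen : ∀ t ∈ G, IsOpen (connectedComponentIn Kᶜ (s t)) :=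
      fun t ht => hKcl.isOpen_compl.connectedComponentIn
    have hUcomp : ∀ t ∈ G, connectedComponentIn Kᶜ (s t) ∈ setComponents Kᶜ :=
      fun t ht => ⟨s t, ht.2, rfl⟩
    have hfrontp : ∀ t ∈ G, s (p t) ∈ frontier (connectedComponentIn Kᶜ (s t)) := by
      intro t ht
      rw [frontier, (hUopen t ht).interior_eq]
      constructor
      · have h1 : p t ∈ closure (Ioo (p t) (q t)) := by
          rw [closure_Ioo (ne_of_lt (lt_trans (hplt t ht) (hqgt t ht)))]
          exact ⟨le_refl _, (lt_trans (hplt t ht) (hqgt t ht)).le⟩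
        have h2 : s (p t) ∈ s '' closure (Ioo (p t) (q t)) := ⟨p t, h1, rfl⟩
        have h3 := image_closure_subset_closure_image hscont h2
        exact closure_mono (himg t ht) h3
      · intro hmem
        exact (connectedComponentIn_subset _ _ hmem) (hpmem t ht).1.2
    have hfrontq : ∀ t ∈ G, s (q t) ∈ frontier (connectedComponentIn Kᶜ (s t)) := by
      intro t ht
      rw [frontier, (hUopen t ht).interior_eq]
      constructor
      · have h1 : q t ∈ closure (Ioo (p t) (q t)) := by
          rw [closure_Ioo (ne_of_lt (lt_trans (hplt t ht) (hqgt t ht)))]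
          exact ⟨(lt_trans (hplt t ht) (hqgt t ht)).le, le_refl _⟩
        have h2 : s (q t) ∈ s '' closure (Ioo (p t) (q t)) := ⟨q t, h1, rfl⟩
        have h3 := image_closure_subset_closure_image hscont h2
        exact closure_mono (himg t ht) h3
      · intro hmem
        exact (connectedComponentIn_subset _ _ hmem) (hqmem t ht).1.2
    -- same gap invariance
    have hsame : ∀ t ∈ G, ∀ t', p t < t' → t' < q t → p t' = p t ∧ q t' = q t := by
      intro t ht t' h1 h2
      have ht'G : t' ∈ G := hgapG t ht t' h1 h2
      constructor
      · have hseteq : E ∩ Iic t' = E ∩ Iic (p t) := by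
          ext r
          constructor
          · rintro ⟨hrE, hr⟩
            refine ⟨hrE, Set.mem_Iic.mpr ?_⟩
            by_contra hcon
            push_neg at hcon
            exact (hgapE t ht r hcon (lt_of_le_of_lt (Set.mem_Iic.mp hr) h2)) hrE
          · rintro ⟨hrE, hr⟩
            exact ⟨hrE, Set.mem_Iic.mpr (le_trans (Set.mem_Iic.mp hr) h1.le)⟩
        show sSup (E ∩ Iic t') = p t
        rw [hseteq]
        apply le_antisymm
        · exact csSup_le ⟨p t, (hpmem t ht).1, Set.mem_Iic.mpr (le_refl _)⟩ (fun r hr => hr.2)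
        · exact le_csSup ⟨p t, fun r hr => hr.2⟩ ⟨(hpmem t ht).1, Set.mem_Iic.mpr (le_refl _)⟩
      · have hseteq : E ∩ Ici t' = E ∩ Ici (q t) := by
          ext r
          constructor
          · rintro ⟨hrE, hr⟩
            refine ⟨hrE, Set.mem_Ici.mpr ?_⟩
            by_contra hcon
            push_neg at hcon
            exact (hgapE t ht r (lt_of_lt_of_le h1 (Set.mem_Ici.mp hr)) hcon) hrE
          · rintro ⟨hrE, hr⟩
            exact ⟨hrE, Set.mem_Ici.mpr (le_trans h2.le (Set.mem_Ici.mp hr))⟩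
        show sInf (E ∩ Ici t') = q t
        rw [hseteq]
        apply le_antisymm
        · exact csInf_le ⟨q t, fun r hr => hr.2⟩ ⟨(hqmem t ht).1, Set.mem_Ici.mpr (le_refl _)⟩
        · exact le_csInf ⟨q t, (hqmem t ht).1, Set.mem_Ici.mpr (le_refl _)⟩ (fun r hr => hr.2)
    have hUsame : ∀ t ∈ G, ∀ t', p t < t' → t' < q t →
        connectedComponentIn Kᶜ (s t') = connectedComponentIn Kᶜ (s t) := by
      intro t ht t' h1 h2
      have : s t' ∈ connectedComponentIn Kᶜ (s t) := himg t ht ⟨t', ⟨h1, h2⟩, rfl⟩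
      exact (connectedComponentIn_eq this).symm
    -- bridges
    have hbridge_ex : ∀ t ∈ G, ∃ B : Set ℂ, B ⊆ K ∧ s (p t) ∈ B ∧ s (q t) ∈ B ∧
        IsPreconnected B ∧ ∀ x ∈ B, dist x (s (p t)) ≤ τ/8 := by
      intro t ht
      set U : Set ℂ := connectedComponentIn Kᶜ (s t) with hUdef
      have hUc := hUcomp t ht
      by_cases hUbig : ENNReal.ofReal (τ/8) < EMetric.diam U
      · -- big component : use the modulus
        have hdistpq : dist (s (p t)) (s (q t)) < Θ U := by
          rw [hsdist]
          have h1 : |p t - q t| ≤ 1 := by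
            rw [abs_le]
            constructor
            · have := hq1 t ht
              have := hp0 t ht
              linarith
            · have := hqmem t ht
              have := hpmem t ht
              have := hq1 t ht
              have := hp0 t ht
              linarith
          calc |p t - q t| * dist a b ≤ 1 * dist a b :=
                mul_le_mul_of_nonneg_right h1 dist_nonneg
          _ = dist a b := one_mul _
          _ < θ := hab
          _ ≤ Θ U := hθleΘ U hUc hUbig
        obtain ⟨B, hBsub, hBp, hBq, hBcomp, hBconn, hBnt, hBdiam⟩ :=
          hΘprop U hUc (s (p t)) (hfrontp t ht) (s (q t)) (hfrontq t ht) hdistpq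
        refine ⟨B, hBsub.trans (frontier_comp_subset K hKcl hUc), hBp, hBq,
          hBconn.isPreconnected, ?_⟩
        intro x hx
        calc dist x (s (p t)) ≤ diam B := dist_le_diam_of_mem hBcomp.isBounded hx hBp
        _ ≤ τ/8 := hBdiam.le
      · -- small component : the whole frontier is a bridge
        push_neg at hUbig
        refine ⟨frontier U, frontier_comp_subset K hKcl hUc, hfrontp t ht, hfrontq t ht,
          frontier_comp_preconnected K hKcl hKconn.isPreconnected hKnt.nonempty hUc, ?_⟩
        intro x hx
        have h1 : edist x (s (p t)) ≤ EMetric.diam (closure U) :=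
          EMetric.edist_le_diam_of_mem (frontier_subset_closure hx)
            (frontier_subset_closure (hfrontp t ht))
        rw [show EMetric.diam (closure U) = EMetric.diam U from Metric.ediam_closure U] at h1
        exact (edist_le_ofReal hτ8.le).mp (le_trans h1 hUbig)
    -- canonical choice of bridges depending only on the gap
    set Q : ℝ → ℝ → Set ℂ → Prop := fun x y B => B ⊆ K ∧ s x ∈ B ∧ s y ∈ B ∧
      IsPreconnected B ∧ ∀ z ∈ B, dist z (s x) ≤ τ/8 with hQdef
    set br : ℝ → ℝ → Set ℂ := fun x y => if h : ∃ B, Q x y B then h.choose else ∅ with hbrdef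
    have hbr : ∀ t ∈ G, Q (p t) (q t) (br (p t) (q t)) := by
      intro t ht
      have hex : ∃ B, Q (p t) (q t) B := hbridge_ex t ht
      simp only [hbrdef, dif_pos hex]
      exact hex.choose_spec
    -- the core set
    set core : Set ℂ := (s '' E) ∪ ⋃ (t : ℝ) (_ : t ∈ G), br (p t) (q t) with hcoredef
    have hcoreK : core ⊆ K := by
      apply Set.union_subset
      · rintro _ ⟨r, hr, rfl⟩
        exact hr.2
      · apply Set.iUnion₂_subset
        intro t ht
        exact (hbr t ht).1
    have hacore : a ∈ core := Or.inl ⟨0, h0E, hs0⟩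
    have hbcore : b ∈ core := Or.inl ⟨1, h1E, hs1⟩
    have hnear : ∀ x ∈ core, ∃ r ∈ Icc (0:ℝ) 1, dist x (s r) ≤ τ/8 := by
      rintro x (⟨r, hr, rfl⟩ | hx)
      · exact ⟨r, hEIcc hr, by rw [dist_self]; linarith⟩
      · obtain ⟨t, ht, hxB⟩ := Set.mem_iUnion₂.mp hx
        refine ⟨p t, ⟨hp0 t ht, le_trans (hplt t ht).le ht.1.2.le⟩, (hbr t ht).2.2.2.2 x hxB⟩
    have hdiamcore : diam core ≤ τ/8 + θ + τ/8 := by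
      apply diam_le_of_forall_dist_le (by linarith)
      intro x hx y hy
      obtain ⟨r, hrI, hr⟩ := hnear x hx
      obtain ⟨r', hr'I, hr'⟩ := hnear y hy
      have hsr : dist (s r) (s r') ≤ θ := by
        rw [hsdist]
        have h1 : |r - r'| ≤ 1 := by
          rw [abs_le]
          constructor <;> [linarith [hrI.1, hrI.2, hr'I.1, hr'I.2];
            linarith [hrI.1, hrI.2, hr'I.1, hr'I.2]]
        calc |r - r'| * dist a b ≤ 1 * dist a b := mul_le_mul_of_nonneg_right h1 dist_nonneg
        _ = dist a b := one_mul _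
        _ ≤ θ := hab.le
      calc dist x y ≤ dist x (s r) + dist (s r) (s r') + dist (s r') y := dist_triangle4 _ _ _ _
      _ ≤ τ/8 + θ + τ/8 := by
        have h2 : dist (s r') y ≤ τ/8 := by rw [dist_comm]; exact hr'
        exact add_le_add (add_le_add hr hsr) h2
    have hIccG : ∀ t ∈ Icc (0:ℝ) 1, t ∉ E → t ∈ G := by
      intro t htI htE
      have ht0 : t ≠ 0 := fun h => htE (h ▸ h0E)
      have ht1 : t ≠ 1 := fun h => htE (h ▸ h1E)
      have htIoo : t ∈ Ioo (0:ℝ) 1 := ⟨lt_of_le_of_ne htI.1 (Ne.symm ht0), lt_of_le_of_ne htI.2 ht1⟩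
      refine ⟨htIoo, ?_⟩
      intro hstK
      exact htE ⟨htI, hstK⟩
    set φ : ℝ → ℂ := fun t => if t ∈ E then s t
      else if t ≤ (p t + q t)/2 then s (p t) else s (q t) with hφdef
    have hφG : ∀ t ∈ G, φ t ∈ br (p t) (q t) ∧ (φ t = s (p t) ∨ φ t = s (q t)) := by
      intro t ht
      have htE : t ∉ E := hGE t ht
      simp only [hφdef, if_neg htE]
      by_cases hmid : t ≤ (p t + q t)/2
      · rw [if_pos hmid]
        exact ⟨(hbr t ht).2.1, Or.inl rfl⟩
      · rw [if_neg hmid]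
        exact ⟨(hbr t ht).2.2.1, Or.inr rfl⟩
    have hφcore : ∀ t ∈ Icc (0:ℝ) 1, φ t ∈ core := by
      intro t htI
      by_cases htE : t ∈ E
      · simp only [hφdef, if_pos htE]
        exact Or.inl ⟨t, htE, rfl⟩
      · have htG := hIccG t htI htE
        rcases (hφG t htG).2 with h | h
        · rw [h]; exact Or.inl ⟨p t, (hpmem t htG).1, rfl⟩
        · rw [h]; exact Or.inl ⟨q t, (hqmem t htG).1, rfl⟩
    -- core is preconnected
    have hcorepre : IsPreconnected core := by
      intro u v hu hv hcov hcu hcv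
      by_contra hne
      have hne' : ∀ z ∈ core, z ∈ u → z ∈ v → False := fun z hz h1 h2 => hne ⟨z, hz, h1, h2⟩
      -- a preconnected subset of core touching one side lies in it
      have hside : ∀ (w w' : Set ℂ), (∀ z ∈ core, z ∈ w ∪ w') →
          (∀ z ∈ core, z ∈ w → z ∈ w' → False) → IsOpen w → IsOpen w' →
          ∀ X, X ⊆ core → IsPreconnected X → ∀ x₁ ∈ X, x₁ ∈ w → ∀ y₁ ∈ X, y₁ ∈ w := by
        intro w w' hcovw hnew hw hw' X hXc hXp x₁ hx₁ hx₁w y₁ hy₁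
        by_contra hy₁w
        have hy₁w' : y₁ ∈ w' := by
          rcases hcovw y₁ (hXc hy₁) with h | h
          · exact absurd h hy₁w
          · exact h
        obtain ⟨z, hzX, hzw, hzw'⟩ := hXp w w' hw hw'
          (fun z hz => hcovw z (hXc hz)) ⟨x₁, hx₁, hx₁w⟩ ⟨y₁, hy₁, hy₁w'⟩
        exact hnew z (hXc hzX) hzw hzw'
      -- openness of the trace
      have hopen : ∀ (w w' : Set ℂ), (∀ z ∈ core, z ∈ w ∪ w') →
          (∀ z ∈ core, z ∈ w → z ∈ w' → False) → IsOpen w → IsOpen w' →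
          ∀ t ∈ Icc (0:ℝ) 1, φ t ∈ w →
          ∃ δ > 0, ∀ t' ∈ Icc (0:ℝ) 1, |t' - t| < δ → φ t' ∈ w := by
        intro w w' hcovw hnew hw hw' t htI hφt
        by_cases htE : t ∈ E
        · -- on the segment : use continuity
          have hst : s t ∈ w := by
            simpa only [hφdef, if_pos htE] using hφt
          obtain ⟨ε, hεpos, hεball⟩ := Metric.isOpen_iff.mp hw (s t) hst
          set δ : ℝ := ε / (2 * (dist a b + 1)) with hδdef
          have hδpos : 0 < δ := by positivity
          refine ⟨δ, hδpos, ?_⟩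
          intro t' ht'I ht'δ
          have hkey : ∀ r : ℝ, |r - t| ≤ 2 * |t' - t| → s r ∈ w := by
            intro r hrle
            apply hεball
            rw [mem_ball, hsdist]
            have hd : (0:ℝ) ≤ dist a b := dist_nonneg
            calc |r - t| * dist a b ≤ (2 * |t' - t|) * dist a b :=
                  mul_le_mul_of_nonneg_right hrle hd
            _ ≤ (2 * δ) * dist a b := by
                  apply mul_le_mul_of_nonneg_right _ hd
                  linarith [ht'δ.le]
            _ < ε := by
                  have : (2 * δ) * (dist a b + 1) = ε := by
                    rw [hδdef]; field_simp
                  nlinarith [hδpos]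
          by_cases ht'E : t' ∈ E
          · simp only [hφdef, if_pos ht'E]
            exact hkey t' (by nlinarith [abs_nonneg (t' - t)])
          · have ht'G := hIccG t' ht'I ht'E
            have htout : ¬ (p t' < t ∧ t < q t') := by
              rintro ⟨h1', h2'⟩
              exact (hgapE t' ht'G t h1' h2') htE
            simp only [hφdef, if_neg ht'E]
            by_cases hcase : t ≤ p t'
            · -- gap lies to the right of t
              have hlt : t < t' := lt_of_le_of_lt hcase (hplt t' ht'G)
              have habs : |t' - t| = t' - t := abs_of_pos (by linarith)
              by_cases hmid : t' ≤ (p t' + q t')/2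
              · rw [if_pos hmid]
                apply hkey
                rw [abs_of_nonneg (by linarith [hplt t' ht'G] : (0:ℝ) ≤ p t' - t)]
                rw [habs]
                linarith [hplt t' ht'G]
              · rw [if_neg hmid]
                push_neg at hmid
                apply hkey
                have hq' : t < q t' := lt_trans hlt (hqgt t' ht'G)
                rw [abs_of_nonneg (by linarith : (0:ℝ) ≤ q t' - t), habs]
                have h2 : q t' - t' < t' - p t' := by linarith
                linarith
            · -- gap lies to the left of t
              push_neg at hcase
              have hqle : q t' ≤ t := by
                by_contra hcon
                push_neg at hcon
                exact htout ⟨hcase, hcon⟩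
              have hlt : t' < t := lt_of_lt_of_le (hqgt t' ht'G) hqle
              have habs : |t' - t| = t - t' := by
                rw [abs_sub_comm]; exact abs_of_pos (by linarith)
              by_cases hmid : t' ≤ (p t' + q t')/2
              · rw [if_pos hmid]
                apply hkey
                have hp' : p t' < t := lt_trans (hplt t' ht'G) hlt
                rw [abs_sub_comm, abs_of_nonneg (by linarith : (0:ℝ) ≤ t - p t'), habs]
                have h2 : t' - p t' ≤ q t' - t' := by linarith [hmid]
                linarith [hqgt t' ht'G]
              · rw [if_neg hmid]
                apply hkey
                rw [abs_sub_comm, abs_of_nonneg (by linarith [hqgt t' ht'G] : (0:ℝ) ≤ t - q t'), habs]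
                linarith [hqgt t' ht'G]
        · -- in a gap : the bridge is on one side
          have htG := hIccG t htI htE
          have hBtsub : br (p t) (q t) ⊆ core := by
            intro z hz
            exact Or.inr (Set.mem_iUnion₂.mpr ⟨t, htG, hz⟩)
          have hBtw : ∀ y₁ ∈ br (p t) (q t), y₁ ∈ w :=
            hside w w' hcovw hnew hw hw' (br (p t) (q t)) hBtsub (hbr t htG).2.2.2.1
              (φ t) (hφG t htG).1 hφt
          refine ⟨min (t - p t) (q t - t), by
            apply lt_min <;> [linarith [hplt t htG]; linarith [hqgt t htG]], ?_⟩
          intro t' ht'I ht'δ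
          rw [abs_sub_lt_iff] at ht'δ
          have h1 : p t < t' := by
            have := lt_of_lt_of_le ht'δ.2 (min_le_left _ _)
            linarith
          have h2 : t' < q t := by
            have := lt_of_lt_of_le ht'δ.1 (min_le_right _ _)
            linarith
          have ht'G := hgapG t htG t' h1 h2
          have hpq := hsame t htG t' h1 h2
          have ht'E : t' ∉ E := hGE t' ht'G
          rcases (hφG t' ht'G).2 with h | h
          · rw [h, hpq.1]
            exact hBtw _ (hbr t htG).2.1
          · rw [h, hpq.2]
            exact hBtw _ (hbr t htG).2.2.1
      -- parameters witnessing each side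
      have hparam : ∀ (w w' : Set ℂ), (∀ z ∈ core, z ∈ w ∪ w') →
          (∀ z ∈ core, z ∈ w → z ∈ w' → False) → IsOpen w → IsOpen w' →
          ∀ x ∈ core, x ∈ w → ∃ t ∈ Icc (0:ℝ) 1, φ t ∈ w := by
        intro w w' hcovw hnew hw hw' x hx hxw
        rcases hx with ⟨r, hrE, rfl⟩ | hx
        · refine ⟨r, hEIcc hrE, ?_⟩
          simpa only [hφdef, if_pos hrE] using hxw
        · obtain ⟨t, htG, hxB⟩ := Set.mem_iUnion₂.mp hx
          have hBtsub : br (p t) (q t) ⊆ core := by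
            intro z hz
            exact Or.inr (Set.mem_iUnion₂.mpr ⟨t, htG, hz⟩)
          refine ⟨t, hGIcc t htG, ?_⟩
          exact hside w w' hcovw hnew hw hw' (br (p t) (q t)) hBtsub
            (hbr t htG).2.2.2.1 x hxB hxw (φ t) (hφG t htG).1
      have hcov' : ∀ z ∈ core, z ∈ u ∪ v := fun z hz => hcov hz
      have hcov'' : ∀ z ∈ core, z ∈ v ∪ u := fun z hz => (hcov hz).symm
      have hne'' : ∀ z ∈ core, z ∈ v → z ∈ u → False := fun z hz h1 h2 => hne' z hz h2 h1
      obtain ⟨x, hxcore, hxu⟩ := hcu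
      obtain ⟨y, hycore, hyv⟩ := hcv
      obtain ⟨t₁, ht₁I, ht₁u⟩ := hparam u v hcov' hne' hu hv x hxcore hxu
      obtain ⟨t₂, ht₂I, ht₂v⟩ := hparam v u hcov'' hne'' hv hu y hycore hyv
      set O₁ : Set ℝ := {r | ∃ δ > 0, ∀ t' ∈ Icc (0:ℝ) 1, |t' - r| < δ → φ t' ∈ u} with hO₁def
      set O₂ : Set ℝ := {r | ∃ δ > 0, ∀ t' ∈ Icc (0:ℝ) 1, |t' - r| < δ → φ t' ∈ v} with hO₂def
      have hO₁open : IsOpen O₁ := by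
        rw [Metric.isOpen_iff]
        rintro r ⟨δ, hδpos, hδ⟩
        refine ⟨δ/2, by linarith, ?_⟩
        intro r' hr'
        rw [mem_ball, Real.dist_eq] at hr'
        refine ⟨δ/2, by linarith, ?_⟩
        intro t' ht'I ht'
        apply hδ t' ht'I
        calc |t' - r| ≤ |t' - r'| + |r' - r| := abs_sub_le _ _ _
        _ < δ/2 + δ/2 := add_lt_add ht' hr'
        _ = δ := by ring
      have hO₂open : IsOpen O₂ := by
        rw [Metric.isOpen_iff]
        rintro r ⟨δ, hδpos, hδ⟩
        refine ⟨δ/2, by linarith, ?_⟩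
        intro r' hr'
        rw [mem_ball, Real.dist_eq] at hr'
        refine ⟨δ/2, by linarith, ?_⟩
        intro t' ht'I ht'
        apply hδ t' ht'I
        calc |t' - r| ≤ |t' - r'| + |r' - r| := abs_sub_le _ _ _
        _ < δ/2 + δ/2 := add_lt_add ht' hr'
        _ = δ := by ring
      have hIccO : Icc (0:ℝ) 1 ⊆ O₁ ∪ O₂ := by
        intro t htI
        rcases hcov' (φ t) (hφcore t htI) with h | h
        · exact Or.inl (hopen u v hcov' hne' hu hv t htI h)
        · exact Or.inr (hopen v u hcov'' hne'' hv hu t htI h)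
      have ht₁O : t₁ ∈ Icc (0:ℝ) 1 ∩ O₁ := ⟨ht₁I, hopen u v hcov' hne' hu hv t₁ ht₁I ht₁u⟩
      have ht₂O : t₂ ∈ Icc (0:ℝ) 1 ∩ O₂ := ⟨ht₂I, hopen v u hcov'' hne'' hv hu t₂ ht₂I ht₂v⟩
      obtain ⟨r, hrI, hr₁, hr₂⟩ := isPreconnected_Icc O₁ O₂ hO₁open hO₂open hIccO
        ⟨t₁, ht₁O⟩ ⟨t₂, ht₂O⟩
      obtain ⟨δ₁, hδ₁pos, hδ₁⟩ := hr₁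
      obtain ⟨δ₂, hδ₂pos, hδ₂⟩ := hr₂
      have hru : φ r ∈ u := hδ₁ r hrI (by simpa using hδ₁pos)
      have hrv : φ r ∈ v := hδ₂ r hrI (by simpa using hδ₂pos)
      exact hne' (φ r) (hφcore r hrI) hru hrv
    -- package the final continuum
    refine ⟨closure core, closure_minimal hcoreK hKcl, subset_closure hacore,
      subset_closure hbcore, hKc.of_isClosed_subset isClosed_closure
        (closure_minimal hcoreK hKcl), hcorepre.closure, ?_⟩
    rw [Metric.diam_closure]
    calc diam core ≤ τ/8 + θ + τ/8 := hdiamcore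
    _ < τ := by linarith
  -- no isolated points in K
  have hperfect : ∀ x ∈ K, ∀ ε > (0:ℝ), ∃ y ∈ K, y ≠ x ∧ dist x y < ε := by
    intro x hx ε hε
    by_contra hcon
    push_neg at hcon
    have hKpre := hKconn.isPreconnected
    have hcover : K ⊆ ball x ε ∪ {x}ᶜ := by
      intro z hz
      by_cases hzx : z = x
      · exact Or.inl (by rw [hzx]; exact mem_ball_self hε)
      · exact Or.inr hzx
    obtain ⟨c, hc, d, hd, hcd⟩ := hKnt
    have hother : ∃ z ∈ K, z ≠ x := by
      by_cases hcx : c = x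
      · exact ⟨d, hd, fun h => hcd (by rw [hcx, h])⟩
      · exact ⟨c, hc, hcx⟩
    obtain ⟨z₀, hz₀, hz₀x⟩ := hother
    obtain ⟨z, hzK, hzb, hzc⟩ := hKpre (ball x ε) {x}ᶜ isOpen_ball isOpen_compl_singleton
      hcover ⟨x, hx, mem_ball_self hε⟩ ⟨z₀, hz₀, hz₀x⟩
    have h1 := hcon z hzK hzc
    rw [mem_ball] at hzb
    rw [dist_comm] at hzb
    linarith
  -- conclusion
  refine ⟨θ, hθpos, ?_⟩
  intro a ha b hb hab
  by_cases hne : a = b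
  · subst hne
    obtain ⟨b', hb', hb'ne, hb'dist⟩ := hperfect a ha θ hθpos
    obtain ⟨B, hBsub, haB, hbB, hBcomp, hBpre, hBdiam⟩ := main a ha b' hb' hb'dist
    exact ⟨B, hBsub, haB, haB, hBcomp, ⟨⟨a, haB⟩, hBpre⟩,
      ⟨a, haB, b', hbB, fun h => hb'ne h.symm⟩, hBdiam⟩
  · obtain ⟨B, hBsub, haB, hbB, hBcomp, hBpre, hBdiam⟩ := main a ha b hb hab
    exact ⟨B, hBsub, haB, hbB, hBcomp, ⟨⟨a, haB⟩, hBpre⟩, ⟨a, haB, b, hbB, hne⟩, hBdiam⟩
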